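/- arXiv:1501.01350 — 4 statements merged into one kernel-verified Lean document; each statement's English description precedes it below -/
import Mathlib

section
/- Let 1 < α < 2, let M ≥ 2 be an integer, and let v_0, v_1, …, v_M be real numbers with v_0 = v_M = 0. Then the compact operator I + (α/24)δ² is a contraction in the Euclidean norm: Σ_{j=1}^{M−1} (v_j + (α/24)(v_{j+1} − 2v_j + v_{j−1}))² ≤ Σ_{j=1}^{M−1} v_j². -/
open Finset

lemma abel_sum (v : ℕ → ℝ) : ∀ n : ℕ,
    ∑ j ∈ Finset.Icc 1 n, v j * (v (j + 1) - 2 * v j + v (j - 1)) +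
      ∑ j ∈ Finset.Icc 1 (n + 1), (v j - v (j - 1)) ^ 2
    = v (n + 1) * (v (n + 1) - v n) - v 0 * (v 1 - v 0) := by
  intro n
  induction n with
  | zero => simp; ring
  | succ n ih =>
      rw [Finset.sum_Icc_succ_top (by omega : 1 ≤ n + 1),
        Finset.sum_Icc_succ_top (by omega : 1 ≤ n + 2)]
      simp only [Nat.add_sub_cancel]
      linear_combination ih

lemma shift_sum (f : ℕ → ℝ) : ∀ n : ℕ,
    ∑ j ∈ Finset.Icc 1 n, f (j + 1) = ∑ j ∈ Finset.Icc 2 (n + 1), f j := by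
  intro n
  induction n with
  | zero => simp
  | succ n ih =>
      rw [Finset.sum_Icc_succ_top (by omega : 1 ≤ n + 1),
        Finset.sum_Icc_succ_top (by omega : 2 ≤ n + 2), ih]

theorem compact_operator_contraction (α : ℝ) (hα1 : 1 < α) (hα2 : α < 2)
    (M : ℕ) (hM : 2 ≤ M) (v : ℕ → ℝ) (hv0 : v 0 = 0) (hvM : v M = 0) :
    ∑ j ∈ Finset.Icc 1 (M - 1),
        (v j + α / 24 * (v (j + 1) - 2 * v j + v (j - 1))) ^ 2 ≤
      ∑ j ∈ Finset.Icc 1 (M - 1), (v j) ^ 2 := by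
  set c : ℝ := α / 24 with hc
  have hc1 : 1 / 24 < c := by rw [hc]; linarith
  have hc2 : c < 1 / 12 := by rw [hc]; linarith
  set d : ℕ → ℝ := fun j => v (j + 1) - 2 * v j + v (j - 1) with hd
  set w : ℕ → ℝ := fun j => v j - v (j - 1) with hw
  have hMn : M - 1 + 1 = M := by omega
  set S : ℝ := ∑ j ∈ Finset.Icc 1 (M - 1), v j * d j with hS
  set T : ℝ := ∑ j ∈ Finset.Icc 1 M, w j ^ 2 with hT
  set S2 : ℝ := ∑ j ∈ Finset.Icc 1 (M - 1), d j ^ 2 with hS2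
  -- Abel: S = -T
  have habel : S + T = 0 := by
    have := abel_sum v (M - 1)
    rw [hMn] at this
    rw [hS, hT, hw, hd]
    simp only []
    rw [this, hvM, hv0]; ring
  have hT0 : 0 ≤ T := Finset.sum_nonneg fun j _ => sq_nonneg _
  -- S2 ≤ 4T
  have hdw : ∀ j, d j = w (j + 1) - w j := by
    intro j
    simp only [hd, hw, Nat.add_sub_cancel]
    ring
  have hS2T : S2 ≤ 4 * T := by
    have step1 : S2 ≤ ∑ j ∈ Finset.Icc 1 (M - 1), (2 * w (j + 1) ^ 2 + 2 * w j ^ 2) := by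
      apply Finset.sum_le_sum
      intro j _
      rw [hdw j]
      nlinarith [sq_nonneg (w (j + 1) + w j)]
    have split : ∑ j ∈ Finset.Icc 1 (M - 1), (2 * w (j + 1) ^ 2 + 2 * w j ^ 2)
        = 2 * (∑ j ∈ Finset.Icc 1 (M - 1), w (j + 1) ^ 2)
          + 2 * (∑ j ∈ Finset.Icc 1 (M - 1), w j ^ 2) := by
      rw [Finset.sum_add_distrib, Finset.mul_sum, Finset.mul_sum]
    have h1 : ∑ j ∈ Finset.Icc 1 (M - 1), w (j + 1) ^ 2 ≤ T := by
      rw [shift_sum (fun j => w j ^ 2) (M - 1), hMn, hT]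
      apply Finset.sum_le_sum_of_subset_of_nonneg
      · apply Finset.Icc_subset_Icc_left; omega
      · intro j _ _; exact sq_nonneg _
    have h2 : ∑ j ∈ Finset.Icc 1 (M - 1), w j ^ 2 ≤ T := by
      rw [hT]
      apply Finset.sum_le_sum_of_subset_of_nonneg
      · apply Finset.Icc_subset_Icc_right; omega
      · intro j _ _; exact sq_nonneg _
    calc S2 ≤ _ := step1
      _ = _ := split
      _ ≤ 4 * T := by linarith
  -- expansion
  have expand : ∑ j ∈ Finset.Icc 1 (M - 1), (v j + c * d j) ^ 2
      = (∑ j ∈ Finset.Icc 1 (M - 1), v j ^ 2) + 2 * c * S + c ^ 2 * S2 := by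
    rw [hS, hS2, Finset.mul_sum, Finset.mul_sum, ← Finset.sum_add_distrib,
      ← Finset.sum_add_distrib]
    apply Finset.sum_congr rfl
    intro j _
    ring
  have : ∑ j ∈ Finset.Icc 1 (M - 1), (v j + c * d j) ^ 2
      ≤ ∑ j ∈ Finset.Icc 1 (M - 1), v j ^ 2 := by
    rw [expand]
    have h3 : c ^ 2 * S2 ≤ c ^ 2 * (4 * T) :=
      mul_le_mul_of_nonneg_left hS2T (sq_nonneg c)
    have h4 : 0 ≤ T * (c * (1 - 2 * c)) :=
      mul_nonneg hT0 (mul_nonneg (by linarith) (by linarith))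
    nlinarith [h3, h4, habel]
  simpa [hd] using this
end

section
/- Let 1 < α < 2 and let N ≥ 1 be an integer. Define the N×N real symmetric Toeplitz matrix A_α by (A_α)_{ij} = g_{i−j}^{(α)}. Then A_α is positive definite: for every nonzero v ∈ ℝ^N one has vᵀ A_α v > 0; moreover every eigenvalue λ of A_α satisfies 0 < λ < g_0^{(α)} + 2^{1+α}/π. -/
open Real Matrix

/-- The fractional centred difference coefficients
`g_k^{(α)} = ((−1)^k Γ(α+1)) / (Γ(α/2 − k + 1) Γ(α/2 + k + 1))`. -/
noncomputable def fracCoeff (α : ℝ) (k : ℤ) : ℝ :=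
  ((-1 : ℝ) ^ k * Real.Gamma (α + 1)) /
    (Real.Gamma (α / 2 - (k : ℝ) + 1) * Real.Gamma (α / 2 + (k : ℝ) + 1))

/-- The symmetric Toeplitz matrix `(A_α)_{ij} = g_{i−j}^{(α)}`. -/
noncomputable def fracToeplitz (α : ℝ) (N : ℕ) : Matrix (Fin N) (Fin N) ℝ :=
  fun i j => fracCoeff α ((i : ℤ) - (j : ℤ))

namespace FracPD

noncomputable def dd (α : ℝ) (k : ℤ) : ℝ :=
  ((-1 : ℝ) ^ k * Real.Gamma α) / (Real.Gamma (α / 2 + (k : ℝ)) * Real.Gamma (α / 2 - (k : ℝ) + 1))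

variable {α : ℝ}

lemma arg_ne_zero (h1 : 1 < α) (h2 : α < 2) (k : ℤ) : α / 2 + (k : ℝ) ≠ 0 := by
  intro h
  have hk : (α : ℝ) = (((-2 * k : ℤ)) : ℝ) := by push_cast; linarith
  rw [hk] at h1 h2
  have h1' : (1 : ℤ) < -2 * k := by exact_mod_cast h1
  have h2' : (-2 * k : ℤ) < 2 := by exact_mod_cast h2
  omega

lemma gamma_ne (h1 : 1 < α) (h2 : α < 2) (k : ℤ) : Real.Gamma (α / 2 + (k : ℝ)) ≠ 0 := by
  apply Real.Gamma_ne_zero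
  intro m hm
  exact arg_ne_zero h1 h2 (k + m) (by push_cast; linarith)

lemma gamma_ne' (h1 : 1 < α) (h2 : α < 2) (k : ℤ) : Real.Gamma (α / 2 - (k : ℝ) + 1) ≠ 0 := by
  have := gamma_ne h1 h2 (1 - k)
  convert this using 2
  push_cast; ring

/-- sign of Γ(α/2 - n) is (-1)^n -/
lemma gamma_sign (h1 : 1 < α) (h2 : α < 2) (n : ℕ) :
    0 < (-1 : ℝ) ^ n * Real.Gamma (α / 2 - n) := by
  induction n with
  | zero => simpa using Real.Gamma_pos_of_pos (by linarith)
  | succ n ih =>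
    have hne : α / 2 - (n + 1 : ℝ) ≠ 0 := by
      have h := arg_ne_zero h1 h2 (-(n + 1)); push_cast at h; intro hc; exact h (by linarith)
    have hrec : Real.Gamma (α / 2 - n) = (α / 2 - (n + 1 : ℝ)) * Real.Gamma (α / 2 - (n + 1 : ℝ)) := by
      have := Real.Gamma_add_one hne
      rw [show α / 2 - (n+1:ℝ) + 1 = α / 2 - n by ring] at this
      exact this
    have hneg : α / 2 - (n + 1 : ℝ) < 0 := by linarith
    have := ih
    rw [hrec] at this
    have hx : (-1:ℝ)^n * Real.Gamma (α/2 - (n+1:ℝ)) < 0 := by nlinarith [this]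
    push_cast
    rw [pow_succ]
    nlinarith [hx]

lemma telescope (h1 : 1 < α) (h2 : α < 2) (k : ℤ) :
    fracCoeff α k = dd α k - dd α (k + 1) := by
  have hx : Real.Gamma (α / 2 + (k:ℝ)) ≠ 0 := gamma_ne h1 h2 k
  have hy : Real.Gamma (α / 2 - (k:ℝ) + 1) ≠ 0 := gamma_ne' h1 h2 k
  have hxz : α / 2 + (k:ℝ) ≠ 0 := arg_ne_zero h1 h2 k
  have hyz : α / 2 - (k:ℝ) ≠ 0 := by
    have := arg_ne_zero h1 h2 (-k); push_cast at this; intro hc; exact this (by linarith)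
  have hA : Real.Gamma (α / 2 + (k:ℝ) + 1) = (α / 2 + k) * Real.Gamma (α / 2 + (k:ℝ)) :=
    Real.Gamma_add_one hxz
  have hB : Real.Gamma (α / 2 - (k:ℝ) + 1) = (α / 2 - k) * Real.Gamma (α / 2 - (k:ℝ)) :=
    Real.Gamma_add_one hyz
  have hC : Real.Gamma (α + 1) = α * Real.Gamma α := Real.Gamma_add_one (by linarith)
  have hy2 : Real.Gamma (α / 2 - (k:ℝ)) ≠ 0 := by
    intro hc; rw [hB, hc, mul_zero] at hy; exact hy rfl
  have hpow : ((-1:ℝ)) ^ (k+1) = -((-1:ℝ)^k) := by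
    rw [zpow_add₀ (by norm_num : (-1:ℝ) ≠ 0)]; simp
  have key : ∀ (c g a b x y : ℝ), a ≠ 0 → b ≠ 0 → x ≠ 0 → y ≠ 0 →
      c * ((a + b) * g) / ((b * y) * (a * x)) = c * g / (x * (b * y)) - -c * g / ((a * x) * y) := by
    intros c g a b x y ha hb hx hy; field_simp; ring
  have hk := key ((-1:ℝ)^k) (Real.Gamma α) (α/2 + (k:ℝ)) (α/2 - (k:ℝ))
      (Real.Gamma (α/2 + (k:ℝ))) (Real.Gamma (α/2 - (k:ℝ))) hxz hyz hx hy2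
  rw [show (α/2 + (k:ℝ)) + (α/2 - (k:ℝ)) = α by ring] at hk
  unfold fracCoeff dd
  push_cast
  rw [show α / 2 + ((k:ℝ) + 1) = α / 2 + (k:ℝ) + 1 by ring,
      show α / 2 - ((k:ℝ) + 1) + 1 = α / 2 - (k:ℝ) by ring]
  rw [hpow, hA, hB, hC]
  exact hk

/-- symmetry -/
lemma fracCoeff_neg (k : ℤ) : fracCoeff α (-k) = fracCoeff α k := by
  unfold fracCoeff
  push_cast
  rw [show α / 2 - (-(k:ℝ)) + 1 = α / 2 + (k:ℝ) + 1 by ring,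
      show α / 2 + (-(k:ℝ)) + 1 = α / 2 - (k:ℝ) + 1 by ring,
      show ((-1:ℝ)) ^ (-k) = ((-1:ℝ))^k by
        rcases Int.even_or_odd k with h | h
        · rw [h.neg.neg_one_zpow, h.neg_one_zpow]
        · rw [h.neg.neg_one_zpow, h.neg_one_zpow]]
  ring

/-- `g_{k+1} < 0` for natural `k`. -/
lemma fracCoeff_neg_of_pos (h1 : 1 < α) (h2 : α < 2) (k : ℕ) :
    fracCoeff α ((k : ℤ) + 1) < 0 := by
  have hs := gamma_sign h1 h2 k
  have hpos : 0 < Real.Gamma (α + 1) := Real.Gamma_pos_of_pos (by linarith)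
  have hpos2 : 0 < Real.Gamma (α / 2 + ((k:ℝ) + 1) + 1) :=
    Real.Gamma_pos_of_pos (by positivity)
  unfold fracCoeff
  push_cast
  rw [show α / 2 - ((k:ℝ)+1) + 1 = α / 2 - (k:ℝ) by ring]
  rw [show ((k:ℤ) + 1) = (((k+1:ℕ)):ℤ) by push_cast; ring, zpow_natCast]
  rw [div_neg_iff]
  rcases Nat.even_or_odd k with h | h
  · right
    have h1' : ((-1:ℝ))^k = 1 := h.neg_one_pow
    constructor
    · rw [pow_succ, h1']; nlinarith
    · rw [h1'] at hs
      exact mul_pos (by linarith) hpos2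
  · left
    have h1' : ((-1:ℝ))^k = -1 := h.neg_one_pow
    constructor
    · rw [pow_succ, h1']; nlinarith
    · rw [h1'] at hs
      have : Real.Gamma (α/2 - (k:ℝ)) < 0 := by linarith
      exact mul_neg_of_neg_of_pos this hpos2

lemma sum_telescope (h1 : 1 < α) (h2 : α < 2) (n : ℕ) :
    ∑ k ∈ Finset.range n, fracCoeff α ((k:ℤ)+1) = dd α 1 - dd α ((n:ℤ)+1) := by
  induction n with
  | zero => simp
  | succ n ih =>
    rw [Finset.sum_range_succ, ih, telescope h1 h2 ((n:ℤ)+1)]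
    push_cast
    ring

lemma g0_eq (h1 : 1 < α) (h2 : α < 2) : fracCoeff α 0 = 2 * dd α 0 := by
  have hhalf : (α/2 : ℝ) ≠ 0 := by positivity
  have hC : Real.Gamma (α + 1) = α * Real.Gamma α := Real.Gamma_add_one (by linarith)
  have hB : Real.Gamma (α/2 + 1) = (α/2) * Real.Gamma (α/2) := Real.Gamma_add_one hhalf
  have hGhalf : Real.Gamma (α/2) ≠ 0 := Real.Gamma_pos_of_pos (by linarith) |>.ne'
  have hG1 : Real.Gamma (α/2 + 1) ≠ 0 := Real.Gamma_pos_of_pos (by linarith) |>.ne'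
  unfold fracCoeff dd
  norm_num
  rw [hC, hB]
  field_simp

lemma dd1_eq : dd α 1 = - dd α 0 := by
  unfold dd
  norm_num
  ring

lemma dd_neg (h1 : 1 < α) (h2 : α < 2) (n : ℕ) : dd α ((n:ℤ)+1) < 0 := by
  have hs := gamma_sign h1 h2 n
  have hpos : 0 < Real.Gamma α := Real.Gamma_pos_of_pos (by linarith)
  have hpos2 : 0 < Real.Gamma (α / 2 + ((n:ℝ) + 1)) :=
    Real.Gamma_pos_of_pos (by positivity)
  unfold dd
  push_cast
  rw [show α / 2 - ((n:ℝ)+1) + 1 = α / 2 - (n:ℝ) by ring]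
  rw [show ((n:ℤ) + 1) = (((n+1:ℕ)):ℤ) by push_cast; ring, zpow_natCast]
  rw [div_neg_iff]
  rcases Nat.even_or_odd n with h | h
  · right
    have h1' : ((-1:ℝ))^n = 1 := h.neg_one_pow
    refine ⟨by rw [pow_succ, h1']; nlinarith, ?_⟩
    rw [h1'] at hs
    exact mul_pos hpos2 (by linarith)
  · left
    have h1' : ((-1:ℝ))^n = -1 := h.neg_one_pow
    refine ⟨by rw [pow_succ, h1']; nlinarith, ?_⟩
    rw [h1'] at hs
    exact mul_neg_of_pos_of_neg hpos2 (by linarith)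

lemma key_pos (h1 : 1 < α) (h2 : α < 2) (n : ℕ) :
    0 < fracCoeff α 0 + 2 * ∑ k ∈ Finset.range n, fracCoeff α ((k:ℤ)+1) := by
  rw [sum_telescope h1 h2 n, g0_eq h1 h2, dd1_eq]
  have := dd_neg h1 h2 n
  linarith

/-- convexity consequence: Γ(x)Γ(y) ≤ Γ(a)Γ(b) for x+y=a+b, x,y∈[a,b], 0<a -/
lemma gamma_mul_gamma_le {a b x y : ℝ} (ha : 0 < a) (hxa : a ≤ x) (hxb : x ≤ b)
    (hya : a ≤ y) (hyb : y ≤ b) (hsum : x + y = a + b) :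
    Real.Gamma x * Real.Gamma y ≤ Real.Gamma a * Real.Gamma b := by
  have hb : 0 < b := lt_of_lt_of_le ha (le_trans hxa hxb)
  have hx : 0 < x := lt_of_lt_of_le ha hxa
  have hy : 0 < y := lt_of_lt_of_le ha hya
  rcases eq_or_lt_of_le (le_trans hxa hxb : a ≤ b) with hab | hab
  · have hxx : x = a := le_antisymm (hab ▸ hxb) hxa
    have hyy : y = a := le_antisymm (hab ▸ hyb) hya
    rw [hxx, hyy, ← hab]
  have cvx := Real.convexOn_log_Gamma
  set t : ℝ := (b - x) / (b - a) with ht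
  have hba : 0 < b - a := by linarith
  have ht0 : 0 ≤ t := div_nonneg (by linarith) hba.le
  have ht1 : 0 ≤ 1 - t := by
    rw [ht]; rw [sub_nonneg, div_le_one hba]; linarith
  have htt : t + (1 - t) = 1 := by ring
  have hxc : t * a + (1 - t) * b = x := by
    have htb : t * (b - a) = b - x := by rw [ht]; exact div_mul_cancel₀ _ hba.ne'
    linear_combination -htb
  have hyc : (1 - t) * a + t * b = y := by
    have : (1-t) * a + t * b = (a + b) - (t * a + (1-t) * b) := by ring
    rw [this, hxc]; linarith
  have h1 := cvx.2 (Set.mem_Ioi.2 ha) (Set.mem_Ioi.2 hb) ht0 ht1 htt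
  have h2 := cvx.2 (Set.mem_Ioi.2 ha) (Set.mem_Ioi.2 hb) ht1 ht0 (by ring)
  simp only [smul_eq_mul, Function.comp_apply] at h1 h2
  rw [hxc] at h1
  rw [show (1 - t) * a + t * b = y from hyc] at h2
  have hsumlog : Real.log (Real.Gamma x) + Real.log (Real.Gamma y) ≤
      Real.log (Real.Gamma a) + Real.log (Real.Gamma b) := by linarith
  have hGx := Real.Gamma_pos_of_pos hx
  have hGy := Real.Gamma_pos_of_pos hy
  have hGa := Real.Gamma_pos_of_pos ha
  have hGb := Real.Gamma_pos_of_pos hb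
  rw [← Real.log_mul hGx.ne' hGy.ne', ← Real.log_mul hGa.ne' hGb.ne'] at hsumlog
  exact (Real.log_le_log_iff (by positivity) (by positivity)).mp hsumlog

lemma g0_le (h1 : 1 < α) (h2 : α < 2) : fracCoeff α 0 ≤ 2 ^ (1 + α) / π := by
  have hπ : (0:ℝ) < π := Real.pi_pos
  have hsπ : (0:ℝ) < √π := Real.sqrt_pos.2 hπ
  have hdup := Real.Gamma_mul_Gamma_add_half (α/2 + 1/2)
  rw [show 2 * (α/2 + 1/2) = α + 1 by ring, show (1:ℝ) - (α + 1) = -α by ring] at hdup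
  rw [show α/2 + 1/2 + 1/2 = α/2 + 1 by ring] at hdup
  have h32 : Real.Gamma (3/2 : ℝ) = √π / 2 := by
    rw [show (3/2 : ℝ) = 1/2 + 1 by norm_num, Real.Gamma_add_one (by norm_num),
        Real.Gamma_one_half_eq]
    ring
  have hcvx : Real.Gamma (α/2 + 1/2) * Real.Gamma (3/2) ≤
      Real.Gamma 1 * Real.Gamma (α/2 + 1) :=
    gamma_mul_gamma_le one_pos (by linarith) (by linarith) (by norm_num) (by linarith)
      (by ring)
  rw [Real.Gamma_one, one_mul, h32] at hcvx
  have hG1 : (0:ℝ) < Real.Gamma (α/2 + 1) := Real.Gamma_pos_of_pos (by linarith)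
  have hGh : (0:ℝ) < Real.Gamma (α/2 + 1/2) := Real.Gamma_pos_of_pos (by linarith)
  have hrp : (0:ℝ) < (2:ℝ) ^ (-α) := Real.rpow_pos_of_pos two_pos _
  have hG : Real.Gamma (α+1) = Real.Gamma (α/2+1/2) * Real.Gamma (α/2+1) / (2 ^ (-α : ℝ) * √π) := by
    rw [hdup]; field_simp
  have hfc : fracCoeff α 0 = Real.Gamma (α+1) / (Real.Gamma (α/2+1) * Real.Gamma (α/2+1)) := by
    unfold fracCoeff; norm_num
  rw [hfc, hG]
  rw [div_div, div_le_div_iff₀ (by positivity) hπ]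
  have h2 : (2:ℝ)^(1+α:ℝ) * (2:ℝ)^(-α:ℝ) = 2 := by
    rw [← Real.rpow_add two_pos]; norm_num
  have hmul := mul_le_mul_of_nonneg_right hcvx
    (by positivity : (0:ℝ) ≤ √π * Real.Gamma (α/2+1))
  have hππ : √π * √π = π := Real.mul_self_sqrt hπ.le
  nlinarith [h2, hππ, hmul, mul_pos hGh hG1,
    mul_nonneg (mul_nonneg hsπ.le hG1.le) hG1.le, hrp, hsπ, hG1, hGh]

lemma fracCoeff_neg_int (h1 : 1 < α) (h2 : α < 2) {m : ℤ} (hm : m ≠ 0) : fracCoeff α m < 0 := by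
  rcases lt_trichotomy m 0 with h | h | h
  · rw [← fracCoeff_neg]
    rw [show -m = (((-m).toNat - 1 : ℕ) : ℤ) + 1 by omega]
    exact fracCoeff_neg_of_pos h1 h2 _
  · exact absurd h hm
  · rw [show m = ((m.toNat - 1 : ℕ) : ℤ) + 1 by omega]
    exact fracCoeff_neg_of_pos h1 h2 _

lemma icc_erase_decomp (n : ℕ) :
    (Finset.Icc (-(n:ℤ)) (n:ℤ)).erase 0 =
      (Finset.range n).image (fun k : ℕ => -((k:ℤ)+1)) ∪
      (Finset.range n).image (fun k : ℕ => (k:ℤ)+1) := by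
  ext m
  simp only [Finset.mem_erase, Finset.mem_Icc, Finset.mem_union, Finset.mem_image,
    Finset.mem_range]
  constructor
  · rintro ⟨hm0, hlo, hhi⟩
    rcases lt_trichotomy m 0 with h | h | h
    · exact Or.inl ⟨(-m).toNat - 1, by omega, by omega⟩
    · exact absurd h hm0
    · exact Or.inr ⟨m.toNat - 1, by omega, by omega⟩
  · rintro (⟨k, hk, rfl⟩ | ⟨k, hk, rfl⟩) <;> refine ⟨by omega, by omega, by omega⟩

lemma sum_icc_erase (n : ℕ) :
    ∑ m ∈ (Finset.Icc (-(n:ℤ)) (n:ℤ)).erase 0, (-(fracCoeff α m)) =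
      2 * ∑ k ∈ Finset.range n, (-(fracCoeff α ((k:ℤ)+1))) := by
  rw [icc_erase_decomp]
  rw [Finset.sum_union]
  · rw [Finset.sum_image (by intros x _ y _ h; simp only at h; omega),
        Finset.sum_image (by intros x _ y _ h; simp only at h; omega)]
    have : ∀ k ∈ Finset.range n, (-(fracCoeff α (-((k:ℤ)+1)))) = -(fracCoeff α ((k:ℤ)+1)) := by
      intro k _; rw [fracCoeff_neg]
    rw [Finset.sum_congr rfl this]
    ring
  · rw [Finset.disjoint_left]
    rintro m hm hm'
    simp only [Finset.mem_image, Finset.mem_range] at hm hm'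
    obtain ⟨k, _, rfl⟩ := hm
    obtain ⟨k', _, h⟩ := hm'
    omega

lemma row_bound (h1 : 1 < α) (h2 : α < 2) {N : ℕ} (i : Fin N) :
    ∑ j ∈ Finset.univ.erase i, (-(fracCoeff α ((i:ℤ) - (j:ℤ)))) ≤
      2 * ∑ k ∈ Finset.range (N-1), (-(fracCoeff α ((k:ℤ)+1))) := by
  rw [← sum_icc_erase]
  have hinj : ∀ x ∈ Finset.univ.erase i, ∀ y ∈ Finset.univ.erase i,
      ((i:ℤ) - (x:ℤ)) = ((i:ℤ) - (y:ℤ)) → x = y := by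
    intro x _ y _ h
    have : (x:ℤ) = (y:ℤ) := by omega
    exact Fin.ext (by exact_mod_cast this)
  rw [← Finset.sum_image (f := fun m => -(fracCoeff α m)) hinj]
  apply Finset.sum_le_sum_of_subset_of_nonneg
  · intro m hm
    simp only [Finset.mem_image, Finset.mem_erase, Finset.mem_univ, and_true] at hm
    obtain ⟨j, hji, rfl⟩ := hm
    have hij : (i:ℤ) ≠ (j:ℤ) := fun h => hji (Fin.ext (by exact_mod_cast h)).symm
    have := i.isLt; have := j.isLt
    simp only [Finset.mem_erase, Finset.mem_Icc]
    refine ⟨by omega, by omega, by omega⟩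
  · intro m hm _
    have hm0 : m ≠ 0 := (Finset.mem_erase.1 hm).1
    have := fracCoeff_neg_int h1 h2 hm0
    linarith

lemma double_sum_eq {N : ℕ} (w : ℤ → ℝ) (hsym : ∀ m, w (-m) = w m) (v : Fin N → ℝ) :
    ∑ i : Fin N, ∑ j : Fin N, w ((i:ℤ) - (j:ℤ)) * ((v i * v i + v j * v j)/2)
      = ∑ i : Fin N, (∑ j : Fin N, w ((i:ℤ) - (j:ℤ))) * (v i * v i) := by
  have key : ∑ i : Fin N, ∑ j : Fin N, w ((i:ℤ) - (j:ℤ)) * (v j * v j)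
      = ∑ i : Fin N, ∑ j : Fin N, w ((i:ℤ) - (j:ℤ)) * (v i * v i) := by
    rw [Finset.sum_comm]
    refine Finset.sum_congr rfl fun i _ => Finset.sum_congr rfl fun j _ => ?_
    rw [show (j:ℤ) - (i:ℤ) = -((i:ℤ) - (j:ℤ)) by ring, hsym]
  have expand : ∀ i j : Fin N, w ((i:ℤ) - (j:ℤ)) * ((v i * v i + v j * v j)/2)
      = w ((i:ℤ) - (j:ℤ)) * (v i * v i) / 2 + w ((i:ℤ) - (j:ℤ)) * (v j * v j) / 2 := by
    intros; ring
  simp_rw [expand, Finset.sum_add_distrib, ← Finset.sum_div, key, Finset.sum_mul]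
  ring

end FracPD

theorem fracToeplitz_posDef_and_eigenvalue_bound (α : ℝ) (hα1 : 1 < α) (hα2 : α < 2)
    (N : ℕ) (hN : 1 ≤ N) :
    (∀ v : Fin N → ℝ, v ≠ 0 → 0 < v ⬝ᵥ (fracToeplitz α N).mulVec v) ∧
    (∀ lam : ℝ, Module.End.HasEigenvalue (Matrix.toLin' (fracToeplitz α N)) lam →
      0 < lam ∧ lam < fracCoeff α 0 + 2 ^ (1 + α) / π) := by
  classical
  set T : ℝ := ∑ k ∈ Finset.range (N-1), (-(fracCoeff α ((k:ℤ)+1))) with hTdef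
  have hTsum : fracCoeff α 0 - 2 * T
      = fracCoeff α 0 + 2 * ∑ k ∈ Finset.range (N-1), fracCoeff α ((k:ℤ)+1) := by
    rw [hTdef, Finset.sum_neg_distrib]; ring
  have hg0T : 0 < fracCoeff α 0 - 2 * T := by
    rw [hTsum]; exact FracPD.key_pos hα1 hα2 (N-1)
  have hg0 : 0 < fracCoeff α 0 := by
    have := FracPD.key_pos hα1 hα2 0; simpa using this
  have hQ : ∀ v : Fin N → ℝ, v ⬝ᵥ (fracToeplitz α N).mulVec v
      = ∑ i : Fin N, ∑ j : Fin N, fracCoeff α ((i:ℤ) - (j:ℤ)) * (v i * v j) := by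
    intro v
    simp only [dotProduct, Matrix.mulVec, fracToeplitz, Finset.mul_sum]
    exact Finset.sum_congr rfl fun i _ => Finset.sum_congr rfl fun j _ => by ring
  have hrow_lo : ∀ i : Fin N,
      fracCoeff α 0 - 2*T ≤ ∑ j : Fin N, fracCoeff α ((i:ℤ) - (j:ℤ)) := by
    intro i
    have hsplit := Finset.sum_erase_add Finset.univ
      (fun j : Fin N => fracCoeff α ((i:ℤ) - (j:ℤ))) (Finset.mem_univ i)
    simp only [sub_self] at hsplit
    have hrb := FracPD.row_bound hα1 hα2 i
    rw [Finset.sum_neg_distrib] at hrb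
    linarith [hsplit, hrb]
  have hrow_hi : ∀ i : Fin N,
      ∑ j : Fin N, |fracCoeff α ((i:ℤ) - (j:ℤ))| ≤ fracCoeff α 0 + 2*T := by
    intro i
    have hsplit := Finset.sum_erase_add Finset.univ
      (fun j : Fin N => |fracCoeff α ((i:ℤ) - (j:ℤ))|) (Finset.mem_univ i)
    simp only [sub_self] at hsplit
    have habs : ∀ j ∈ Finset.univ.erase i,
        |fracCoeff α ((i:ℤ) - (j:ℤ))| = -(fracCoeff α ((i:ℤ) - (j:ℤ))) := by
      intro j hj
      have hji : j ≠ i := (Finset.mem_erase.1 hj).1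
      have hne : (i:ℤ) - (j:ℤ) ≠ 0 := by
        intro h; exact hji (Fin.ext (by omega))
      exact abs_of_neg (FracPD.fracCoeff_neg_int hα1 hα2 hne)
    rw [Finset.sum_congr rfl habs, abs_of_pos hg0] at hsplit
    have hrb := FracPD.row_bound hα1 hα2 i
    linarith [hsplit, hrb]
  have hQlow : ∀ v : Fin N → ℝ,
      (fracCoeff α 0 - 2*T) * (∑ i, v i * v i) ≤ v ⬝ᵥ (fracToeplitz α N).mulVec v := by
    intro v
    rw [hQ v]
    calc (fracCoeff α 0 - 2*T) * (∑ i, v i * v i)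
        = ∑ i : Fin N, (fracCoeff α 0 - 2*T) * (v i * v i) := Finset.mul_sum _ _ _
      _ ≤ ∑ i : Fin N, (∑ j : Fin N, fracCoeff α ((i:ℤ) - (j:ℤ))) * (v i * v i) :=
          Finset.sum_le_sum fun i _ =>
            mul_le_mul_of_nonneg_right (hrow_lo i) (mul_self_nonneg _)
      _ = ∑ i : Fin N, ∑ j : Fin N, fracCoeff α ((i:ℤ) - (j:ℤ)) * ((v i * v i + v j * v j)/2) :=
          (FracPD.double_sum_eq _ (fun m => FracPD.fracCoeff_neg m) v).symm
      _ ≤ ∑ i : Fin N, ∑ j : Fin N, fracCoeff α ((i:ℤ) - (j:ℤ)) * (v i * v j) := by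
          apply Finset.sum_le_sum; intro i _
          apply Finset.sum_le_sum; intro j _
          by_cases hij : i = j
          · subst hij; apply le_of_eq; ring
          · have hne : (i:ℤ) - (j:ℤ) ≠ 0 := by
              intro h; exact hij (Fin.ext (by omega))
            have hneg := FracPD.fracCoeff_neg_int hα1 hα2 hne
            have hvv : v i * v j ≤ (v i * v i + v j * v j)/2 := by
              nlinarith [sq_nonneg (v i - v j)]
            exact mul_le_mul_of_nonpos_left hvv hneg.le
  have hQhigh : ∀ v : Fin N → ℝ,
      v ⬝ᵥ (fracToeplitz α N).mulVec v ≤ (fracCoeff α 0 + 2*T) * (∑ i, v i * v i) := by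
    intro v
    rw [hQ v]
    calc ∑ i : Fin N, ∑ j : Fin N, fracCoeff α ((i:ℤ) - (j:ℤ)) * (v i * v j)
        ≤ ∑ i : Fin N, ∑ j : Fin N, |fracCoeff α ((i:ℤ) - (j:ℤ))| * ((v i * v i + v j * v j)/2) := by
          apply Finset.sum_le_sum; intro i _
          apply Finset.sum_le_sum; intro j _
          calc fracCoeff α ((i:ℤ) - (j:ℤ)) * (v i * v j)
              ≤ |fracCoeff α ((i:ℤ) - (j:ℤ)) * (v i * v j)| := le_abs_self _
            _ = |fracCoeff α ((i:ℤ) - (j:ℤ))| * |v i * v j| := abs_mul _ _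
            _ ≤ |fracCoeff α ((i:ℤ) - (j:ℤ))| * ((v i * v i + v j * v j)/2) := by
                apply mul_le_mul_of_nonneg_left _ (abs_nonneg _)
                rw [abs_mul]
                nlinarith [sq_nonneg (|v i| - |v j|), abs_mul_abs_self (v i),
                  abs_mul_abs_self (v j), abs_nonneg (v i), abs_nonneg (v j)]
      _ = ∑ i : Fin N, (∑ j : Fin N, |fracCoeff α ((i:ℤ) - (j:ℤ))|) * (v i * v i) :=
          FracPD.double_sum_eq (fun m => |fracCoeff α m|)
            (fun m => by show |fracCoeff α (-m)| = |fracCoeff α m|; rw [FracPD.fracCoeff_neg]) v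
      _ ≤ ∑ i : Fin N, (fracCoeff α 0 + 2*T) * (v i * v i) :=
          Finset.sum_le_sum fun i _ =>
            mul_le_mul_of_nonneg_right (hrow_hi i) (mul_self_nonneg _)
      _ = (fracCoeff α 0 + 2*T) * (∑ i, v i * v i) := (Finset.mul_sum _ _ _).symm
  have hSpos : ∀ v : Fin N → ℝ, v ≠ 0 → 0 < ∑ i, v i * v i := by
    intro v hv
    obtain ⟨i, hi⟩ := Function.ne_iff.1 hv
    exact Finset.sum_pos' (fun j _ => mul_self_nonneg _)
      ⟨i, Finset.mem_univ i, mul_self_pos.2 hi⟩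
  constructor
  · intro v hv
    exact lt_of_lt_of_le (mul_pos hg0T (hSpos v hv)) (hQlow v)
  · intro lam hlam
    obtain ⟨v, hv⟩ := hlam.exists_hasEigenvector
    have hv0 : v ≠ 0 := hv.2
    have heq : (fracToeplitz α N).mulVec v = lam • v := by
      have := hv.apply_eq_smul
      rwa [Matrix.toLin'_apply] at this
    have hQeq : v ⬝ᵥ (fracToeplitz α N).mulVec v = lam * ∑ i, v i * v i := by
      rw [heq, dotProduct_smul]
      simp [dotProduct, smul_eq_mul]
    have hS := hSpos v hv0
    have hlow := hQlow v
    have hhigh := hQhigh v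
    rw [hQeq] at hlow hhigh
    constructor
    · nlinarith [hlow, hS, hg0T, mul_pos hg0T hS]
    · have hle : lam ≤ fracCoeff α 0 + 2*T := by nlinarith [hhigh, hS]
      have hb := FracPD.g0_le hα1 hα2
      linarith
end

section
/- Let 1 < α < 2, let N ≥ 1 be an integer, and let τ > 0, h > 0, ν > 0 and κ ≠ 0 be reals. Define the N×N matrices A_α by (A_α)_{ij} = g_{i−j}^{(α)} and D_α as the symmetric tridiagonal matrix with diagonal entries 1 − α/12 and off-diagonal entries α/24. If (τ/h^α) · (τν²/12 + 1/τ)^{−1} ≤ (6 − α)/(2κ² g_0^{(α)}), then the matrix G_α = D_α − (τκ²/(6h^α)) · (τν²/12 + 1/τ)^{−1} · A_α is positive definite: vᵀ G_α v > 0 for every nonzero v ∈ ℝ^N. -/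
open Real Matrix

/-- The symmetric tridiagonal matrix `D_α` with diagonal entries `1 − α/12` and
off-diagonal entries `α/24`. -/
noncomputable def compactTridiag (α : ℝ) (N : ℕ) : Matrix (Fin N) (Fin N) ℝ :=
  fun i j =>
    if i = j then 1 - α / 12
    else if (i : ℤ) - (j : ℤ) = 1 ∨ (j : ℤ) - (i : ℤ) = 1 then α / 24 else 0

section basic
variable {α : ℝ} (hα1 : 1 < α) (hα2 : α < 2)

lemma gamma_ne_zero_shift (k : ℤ) (hα1 : 1 < α) (hα2 : α < 2) :
    Real.Gamma (α / 2 - (k : ℝ) + 1) ≠ 0 := by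
  apply Real.Gamma_ne_zero
  intro m h
  have : α / 2 = (k : ℝ) - 1 - (m : ℝ) := by linarith
  have h2 : α / 2 = ((k - 1 - (m : ℤ) : ℤ) : ℝ) := by push_cast; linarith
  have h3 : (0 : ℝ) < ((k - 1 - (m : ℤ) : ℤ) : ℝ) := by rw [← h2]; linarith
  have h4 : ((k - 1 - (m : ℤ) : ℤ) : ℝ) < 1 := by rw [← h2]; linarith
  have h5 : (0 : ℤ) < k - 1 - (m : ℤ) := by exact_mod_cast h3
  have h6 : (k - 1 - (m : ℤ) : ℤ) < 1 := by exact_mod_cast h4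
  omega

lemma fracCoeff_zero_pos (hα1 : 1 < α) (hα2 : α < 2) : 0 < fracCoeff α 0 := by
  unfold fracCoeff
  simp only [Int.cast_zero, zpow_zero, one_mul, sub_zero, add_zero]
  apply div_pos (Real.Gamma_pos_of_pos (by linarith))
  exact mul_pos (Real.Gamma_pos_of_pos (by linarith)) (Real.Gamma_pos_of_pos (by linarith))

lemma fracCoeff_symm (k : ℤ) : fracCoeff α (-k) = fracCoeff α k := by
  unfold fracCoeff
  have h1 : ((-1 : ℝ)) ^ (-k) = (-1) ^ k := by
    rw [← _root_.inv_zpow', inv_neg, inv_one]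
  have h2 : α / 2 - ((-k : ℤ) : ℝ) + 1 = α / 2 + (k : ℝ) + 1 := by push_cast; ring
  have h3 : α / 2 + ((-k : ℤ) : ℝ) + 1 = α / 2 - (k : ℝ) + 1 := by push_cast; ring
  rw [h1, h2, h3, mul_comm (Real.Gamma (α / 2 + (k:ℝ) + 1))]

lemma fracCoeff_rec (hα1 : 1 < α) (hα2 : α < 2) (k : ℕ) :
    ((k : ℝ) + 1 + α / 2) * fracCoeff α ((k : ℤ) + 1) =
      ((k : ℝ) - α / 2) * fracCoeff α k := by
  unfold fracCoeff
  have hne1 : Real.Gamma (α / 2 - (k : ℝ) + 1) ≠ 0 := by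
    have := gamma_ne_zero_shift (α := α) k hα1 hα2; simpa using this
  have hne0 : Real.Gamma (α / 2 - (k : ℝ)) ≠ 0 := by
    have := gamma_ne_zero_shift (α := α) (k + 1) hα1 hα2
    push_cast at this
    convert this using 2; ring
  have hx : α / 2 - (k : ℝ) ≠ 0 := by
    intro h
    have : α / 2 = ((k : ℤ) : ℝ) := by push_cast; linarith
    have h1 : (0:ℝ) < ((k:ℤ):ℝ) := by rw [← this]; linarith
    have h2 : ((k:ℤ):ℝ) < 1 := by rw [← this]; linarith
    have h1' : (0:ℤ) < (k:ℤ) := by exact_mod_cast h1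
    have h2' : ((k:ℤ):ℤ) < 1 := by exact_mod_cast h2
    omega
  have hgp : 0 < Real.Gamma (α / 2 + (k : ℝ) + 1) :=
    Real.Gamma_pos_of_pos (by positivity)
  have hgp2 : 0 < Real.Gamma (α / 2 + (k : ℝ) + 1 + 1) :=
    Real.Gamma_pos_of_pos (by positivity)
  -- rewrite the k+1 Gammas
  have e1 : α / 2 - ((k : ℤ) + 1 : ℤ) + 1 = α / 2 - (k : ℝ) := by push_cast; ring
  have e2 : α / 2 + (((k : ℤ) + 1 : ℤ) : ℝ) + 1 = (α / 2 + (k : ℝ) + 1) + 1 := by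
    push_cast; ring
  have g2 : Real.Gamma ((α / 2 + (k : ℝ) + 1) + 1)
      = (α / 2 + (k : ℝ) + 1) * Real.Gamma (α / 2 + (k : ℝ) + 1) :=
    Real.Gamma_add_one (by positivity)
  have g1 : Real.Gamma (α / 2 - (k : ℝ) + 1)
      = (α / 2 - (k : ℝ)) * Real.Gamma (α / 2 - (k : ℝ)) :=
    Real.Gamma_add_one hx
  have hzp : ((-1 : ℝ)) ^ ((k : ℤ) + 1) = -((-1 : ℝ)) ^ (k : ℤ) := by
    rw [zpow_add_one₀ (by norm_num)]; ring
  rw [e1]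
  push_cast
  rw [show α / 2 + ((k:ℝ)+1) + 1 = (α / 2 + (k : ℝ) + 1) + 1 by ring]
  rw [g2, g1, hzp]
  have hs : α / 2 + (k:ℝ) + 1 ≠ 0 := by positivity
  have hden1 : Real.Gamma (α / 2 - (k:ℝ)) * ((α / 2 + (k:ℝ) + 1) * Real.Gamma (α / 2 + (k:ℝ) + 1)) ≠ 0 :=
    mul_ne_zero hne0 (mul_ne_zero hs hgp.ne')
  have hden2 : (α / 2 - (k:ℝ)) * Real.Gamma (α / 2 - (k:ℝ)) * Real.Gamma (α / 2 + (k:ℝ) + 1) ≠ 0 :=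
    mul_ne_zero (mul_ne_zero hx hne0) hgp.ne'
  rw [← mul_div_assoc, ← mul_div_assoc, div_eq_div_iff hden1 hden2]
  ring

end basic

section sums
variable {α : ℝ}

lemma fracCoeff_neg (hα1 : 1 < α) (hα2 : α < 2) :
    ∀ k : ℕ, 1 ≤ k → fracCoeff α (k : ℤ) < 0 := by
  intro k hk
  induction k with
  | zero => omega
  | succ n ih =>
    rcases Nat.lt_or_ge n 1 with h | hn
    · have hn : n = 0 := by omega
      subst hn
      unfold fracCoeff
      norm_num
      apply div_neg_of_neg_of_pos
      · have := Real.Gamma_pos_of_pos (show (0:ℝ) < α + 1 by linarith); linarith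
      · exact mul_pos (Real.Gamma_pos_of_pos (by linarith))
          (Real.Gamma_pos_of_pos (by push_cast; linarith))
    · have hgn := ih hn
      have hrec := fracCoeff_rec hα1 hα2 n
      have h1 : (0:ℝ) < (n:ℝ) + 1 + α / 2 := by positivity
      have h2 : (0:ℝ) < (n:ℝ) - α / 2 := by
        have : (1:ℝ) ≤ (n:ℝ) := by exact_mod_cast hn
        linarith
      have hlt : ((n:ℝ) + 1 + α / 2) * fracCoeff α ((n:ℤ) + 1) < 0 := by
        rw [hrec]; exact mul_neg_of_pos_of_neg h2 hgn
      have : fracCoeff α ((n:ℤ) + 1) < 0 := by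
        by_contra hc
        push_neg at hc
        nlinarith
      exact_mod_cast this

lemma fracCoeff_sum_id (hα1 : 1 < α) (hα2 : α < 2) (M : ℕ) :
    ((M : ℝ) + 1 + α / 2) * fracCoeff α ((M : ℤ) + 1) +
      α * ∑ k ∈ Finset.range (M + 1), fracCoeff α (k : ℤ) =
      α / 2 * fracCoeff α 0 := by
  induction M with
  | zero =>
    have h := fracCoeff_rec hα1 hα2 0
    rw [Finset.sum_range_one]
    push_cast at h ⊢
    linarith
  | succ n ih =>
    have hrec := fracCoeff_rec hα1 hα2 (n + 1)
    rw [Finset.sum_range_succ]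
    push_cast at hrec ⊢
    linarith

lemma fracCoeff_partial_lt (hα1 : 1 < α) (hα2 : α < 2) (M : ℕ) :
    ∑ k ∈ Finset.Icc 1 M, |fracCoeff α (k : ℤ)| < fracCoeff α 0 / 2 := by
  have hid := fracCoeff_sum_id hα1 hα2 M
  have hneg : fracCoeff α ((M : ℤ) + 1) < 0 := by
    have := fracCoeff_neg hα1 hα2 (M + 1) (by omega)
    exact_mod_cast this
  have hpos : (0:ℝ) < (M : ℝ) + 1 + α / 2 := by positivity
  have hS : α / 2 * fracCoeff α 0 < α * ∑ k ∈ Finset.range (M + 1), fracCoeff α (k : ℤ) := by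
    nlinarith
  have hα0 : (0:ℝ) < α := by linarith
  have hS2 : fracCoeff α 0 / 2 < ∑ k ∈ Finset.range (M + 1), fracCoeff α (k : ℤ) := by
    rw [div_lt_iff₀ (by norm_num : (0:ℝ) < 2)] at *
    nlinarith
  have hsplit : ∑ k ∈ Finset.range (M + 1), fracCoeff α (k : ℤ) =
      fracCoeff α 0 + ∑ k ∈ Finset.Icc 1 M, fracCoeff α (k : ℤ) := by
    rw [Finset.range_eq_Ico, show Finset.Ico 0 (M+1) = Finset.Icc 0 M by rfl]
    rw [← Finset.sum_erase_add (Finset.Icc 0 M) _ (show 0 ∈ Finset.Icc 0 M by simp)]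
    rw [show (Finset.Icc 0 M).erase 0 = Finset.Icc 1 M by ext x; simp; omega]
    push_cast
    ring
  have habs : ∑ k ∈ Finset.Icc 1 M, |fracCoeff α (k : ℤ)| =
      -∑ k ∈ Finset.Icc 1 M, fracCoeff α (k : ℤ) := by
    rw [← Finset.sum_neg_distrib]
    apply Finset.sum_congr rfl
    intro k hk
    simp only [Finset.mem_Icc] at hk
    rw [abs_of_neg (fracCoeff_neg hα1 hα2 k hk.1)]
  rw [habs]
  rw [hsplit] at hS2
  linarith

end sums

open Matrix in
lemma posdef_of_sdd {N : ℕ} (M : Matrix (Fin N) (Fin N) ℝ)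
    (hsym : ∀ i j, |M i j| = |M j i|)
    (hdom : ∀ i, ∑ j ∈ Finset.univ.erase i, |M i j| < M i i)
    (v : Fin N → ℝ) (hv : v ≠ 0) :
    0 < v ⬝ᵥ M.mulVec v := by
  classical
  have expand : v ⬝ᵥ M.mulVec v = ∑ i, ∑ j, v i * (M i j * v j) := by
    simp [dotProduct, mulVec, Finset.mul_sum]
  have hswap : ∑ i, ∑ j ∈ Finset.univ.erase i, |M i j| * v j ^ 2
      = ∑ i, (∑ j ∈ Finset.univ.erase i, |M i j|) * v i ^ 2 := by
    rw [Finset.sum_comm' (t' := Finset.univ) (s' := fun j => Finset.univ.erase j)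
      (fun x y => by
        simp only [Finset.mem_univ, Finset.mem_erase, true_and, and_true]
        exact ne_comm)]
    refine Finset.sum_congr rfl fun j _ => ?_
    rw [Finset.sum_mul]
    exact Finset.sum_congr rfl fun i _ => by rw [hsym]
  have step : ∀ i : Fin N,
      M i i * v i ^ 2 - (((∑ j ∈ Finset.univ.erase i, |M i j|) * v i ^ 2
          + ∑ j ∈ Finset.univ.erase i, |M i j| * v j ^ 2) / 2)
        ≤ ∑ j, v i * (M i j * v j) := by
    intro i
    rw [← Finset.add_sum_erase _ _ (Finset.mem_univ i)]
    have hterm : ∀ j ∈ Finset.univ.erase i,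
        -(|M i j| * (v i ^ 2 + v j ^ 2) / 2) ≤ v i * (M i j * v j) := by
      intro j _
      have h1 : |v i * v j| ≤ (v i ^ 2 + v j ^ 2) / 2 := by
        rw [abs_mul]
        nlinarith [sq_nonneg (|v i| - |v j|), sq_abs (v i), sq_abs (v j)]
      have h2 : -(|M i j| * |v i * v j|) ≤ M i j * (v i * v j) := by
        rw [← abs_mul]; exact neg_abs_le _
      have h3 : |M i j| * |v i * v j| ≤ |M i j| * ((v i ^ 2 + v j ^ 2) / 2) :=
        mul_le_mul_of_nonneg_left h1 (abs_nonneg _)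
      calc -(|M i j| * (v i ^ 2 + v j ^ 2) / 2)
          = -(|M i j| * ((v i ^ 2 + v j ^ 2) / 2)) := by ring
        _ ≤ -(|M i j| * |v i * v j|) := by linarith
        _ ≤ M i j * (v i * v j) := h2
        _ = v i * (M i j * v j) := by ring
    have hsum := Finset.sum_le_sum hterm
    rw [Finset.sum_neg_distrib] at hsum
    have e1 : ∑ j ∈ Finset.univ.erase i, |M i j| * (v i ^ 2 + v j ^ 2) / 2
        = ((∑ j ∈ Finset.univ.erase i, |M i j|) * v i ^ 2
            + ∑ j ∈ Finset.univ.erase i, |M i j| * v j ^ 2) / 2 := by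
      rw [Finset.sum_mul, ← Finset.sum_add_distrib, ← Finset.sum_div]
      exact congrArg (· / 2) (Finset.sum_congr rfl fun j _ => by ring)
    rw [e1] at hsum
    have : M i i * v i ^ 2 = v i * (M i i * v i) := by ring
    linarith
  have hub : ∑ i, (M i i * v i ^ 2
      - (((∑ j ∈ Finset.univ.erase i, |M i j|) * v i ^ 2
          + ∑ j ∈ Finset.univ.erase i, |M i j| * v j ^ 2) / 2))
      ≤ v ⬝ᵥ M.mulVec v := by
    rw [expand]; exact Finset.sum_le_sum fun i _ => step i
  have hLHS : ∑ i, (M i i * v i ^ 2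
      - (((∑ j ∈ Finset.univ.erase i, |M i j|) * v i ^ 2
          + ∑ j ∈ Finset.univ.erase i, |M i j| * v j ^ 2) / 2))
      = ∑ i, (M i i - ∑ j ∈ Finset.univ.erase i, |M i j|) * v i ^ 2 := by
    rw [Finset.sum_sub_distrib]
    have : ∑ i, (((∑ j ∈ Finset.univ.erase i, |M i j|) * v i ^ 2
          + ∑ j ∈ Finset.univ.erase i, |M i j| * v j ^ 2) / 2)
        = ∑ i, (∑ j ∈ Finset.univ.erase i, |M i j|) * v i ^ 2 := by
      rw [← Finset.sum_div, Finset.sum_add_distrib, hswap]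
      ring
    rw [this]
    rw [← Finset.sum_sub_distrib]
    exact Finset.sum_congr rfl fun i _ => by ring
  have hpos : 0 < ∑ i, (M i i - ∑ j ∈ Finset.univ.erase i, |M i j|) * v i ^ 2 := by
    obtain ⟨i0, hi0⟩ := Function.ne_iff.mp hv
    apply Finset.sum_pos'
    · intro i _
      have := hdom i
      have h2 : (0:ℝ) ≤ v i ^ 2 := sq_nonneg _
      nlinarith
    · exact ⟨i0, Finset.mem_univ i0, by
        have := hdom i0
        have h2 : (0:ℝ) < v i0 ^ 2 :=
          lt_of_le_of_ne (sq_nonneg _) (Ne.symm (pow_ne_zero 2 hi0))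
        nlinarith⟩
  linarith [hub, hLHS.symm.le]


section rows
variable {α : ℝ}

lemma rowA (hα1 : 1 < α) (hα2 : α < 2) {N : ℕ} (hN : 1 ≤ N) (i : Fin N) :
    ∑ j ∈ Finset.univ.erase i, |fracToeplitz α N i j| < fracCoeff α 0 := by
  classical
  set e : Fin N → ℤ := fun j => (i : ℤ) - (j : ℤ) with he
  have hinj : Set.InjOn e (Finset.univ.erase i) := by
    intro a _ b _ hab
    simp only [he] at hab
    have : (a : ℤ) = (b : ℤ) := by omega
    exact Fin.ext (by exact_mod_cast this)
  have hsum1 : ∑ j ∈ Finset.univ.erase i, |fracToeplitz α N i j|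
      = ∑ k ∈ (Finset.univ.erase i).image e, |fracCoeff α k| := by
    rw [Finset.sum_image (fun a ha b hb h => hinj ha hb h)]
    rfl
  set T : Finset ℤ := (Finset.Icc (-(N:ℤ)+1) ((N:ℤ)-1)).erase 0 with hT
  have hsub : (Finset.univ.erase i).image e ⊆ T := by
    intro k hk
    simp only [Finset.mem_image, Finset.mem_erase, Finset.mem_univ, true_and] at hk
    obtain ⟨j, hji, rfl⟩ := hk
    have h1 : (j : ℤ) < N := by exact_mod_cast j.isLt
    have h2 : (i : ℤ) < N := by exact_mod_cast i.isLt
    have h3 : (0:ℤ) ≤ (j:ℤ) := by positivity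
    have h4 : (0:ℤ) ≤ (i:ℤ) := by positivity
    have h5 : (i : ℤ) ≠ (j : ℤ) := by
      intro h
      exact hji.1 (Fin.ext (by exact_mod_cast h)).symm
    simp only [hT, Finset.mem_erase, Finset.mem_Icc, he]
    omega
  have hsum2 : ∑ k ∈ (Finset.univ.erase i).image e, |fracCoeff α k|
      ≤ ∑ k ∈ T, |fracCoeff α k| :=
    Finset.sum_le_sum_of_subset_of_nonneg hsub (fun _ _ _ => abs_nonneg _)
  set P : Finset ℤ := Finset.Icc 1 ((N:ℤ)-1) with hP
  have hTP : T = P ∪ P.image (fun k => -k) := by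
    ext k
    simp only [hT, hP, Finset.mem_erase, Finset.mem_Icc, Finset.mem_union, Finset.mem_image]
    constructor
    · rintro ⟨h0, h1, h2⟩
      rcases lt_or_gt_of_ne h0 with h | h
      · exact Or.inr ⟨-k, by omega, by omega⟩
      · exact Or.inl (by omega)
    · rintro (⟨h1, h2⟩ | ⟨m, ⟨h1, h2⟩, rfl⟩) <;> omega
  have hdisj : Disjoint P (P.image (fun k => -k)) := by
    rw [Finset.disjoint_left]
    intro k hk hk2
    simp only [hP, Finset.mem_Icc, Finset.mem_image] at hk hk2
    obtain ⟨m, hm, rfl⟩ := hk2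
    omega
  have hsum3 : ∑ k ∈ T, |fracCoeff α k| = 2 * ∑ k ∈ P, |fracCoeff α k| := by
    rw [hTP, Finset.sum_union hdisj, Finset.sum_image (by intro a _ b _ h; have h' : -a = -b := h; omega)]
    have : ∀ k ∈ P, |fracCoeff α (-k)| = |fracCoeff α k| := fun k _ => by
      rw [fracCoeff_symm]
    rw [Finset.sum_congr rfl this]
    ring
  have hPnat : P = (Finset.Icc 1 (N-1)).image (fun m : ℕ => (m : ℤ)) := by
    ext k
    simp only [hP, Finset.mem_Icc, Finset.mem_image]
    constructor
    · intro ⟨h1, h2⟩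
      exact ⟨k.toNat, by omega, by omega⟩
    · rintro ⟨m, hm, rfl⟩
      omega
  have hsum4 : ∑ k ∈ P, |fracCoeff α k| = ∑ m ∈ Finset.Icc 1 (N-1), |fracCoeff α (m:ℤ)| := by
    rw [hPnat, Finset.sum_image (by intro a _ b _ h; have h' : (a:ℤ) = (b:ℤ) := h; omega)]
  have hfin := fracCoeff_partial_lt hα1 hα2 (N - 1)
  calc ∑ j ∈ Finset.univ.erase i, |fracToeplitz α N i j|
      ≤ ∑ k ∈ T, |fracCoeff α k| := by rw [hsum1]; exact hsum2
    _ = 2 * ∑ m ∈ Finset.Icc 1 (N-1), |fracCoeff α (m:ℤ)| := by rw [hsum3, hsum4]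
    _ < fracCoeff α 0 := by linarith

lemma rowD (hα1 : 1 < α) (hα2 : α < 2) {N : ℕ} (i : Fin N) :
    ∑ j ∈ Finset.univ.erase i, |compactTridiag α N i j| ≤ α / 12 := by
  classical
  have hstep : ∀ j ∈ Finset.univ.erase i, |compactTridiag α N i j|
      = if (i : ℤ) - (j : ℤ) = 1 ∨ (j : ℤ) - (i : ℤ) = 1 then α/24 else 0 := by
    intro j hj
    have hne : i ≠ j := by
      simp only [Finset.mem_erase] at hj
      exact fun h => hj.1 h.symm
    unfold compactTridiag
    rw [if_neg hne]
    split
    · exact abs_of_nonneg (by linarith)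
    · exact abs_zero
  rw [Finset.sum_congr rfl hstep, Finset.sum_ite, Finset.sum_const, Finset.sum_const_zero,
    add_zero, nsmul_eq_mul]
  have hcard : ((Finset.univ.erase i).filter
      (fun j : Fin N => (i : ℤ) - (j : ℤ) = 1 ∨ (j : ℤ) - (i : ℤ) = 1)).card ≤ 2 := by
    have := Finset.card_le_card_of_injOn (f := fun j : Fin N => (j : ℤ))
      (t := {(i : ℤ) - 1, (i : ℤ) + 1})
      (s := (Finset.univ.erase i).filter
        (fun j : Fin N => (i : ℤ) - (j : ℤ) = 1 ∨ (j : ℤ) - (i : ℤ) = 1))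
      (by
        intro j hj
        simp only [Finset.mem_coe, Finset.coe_filter, Finset.mem_filter, Set.mem_setOf_eq] at hj
        simp only [Finset.mem_coe, Finset.coe_insert, Finset.coe_singleton, Set.mem_insert_iff, Set.mem_singleton_iff, Finset.mem_insert, Finset.mem_singleton]
        omega)
      (by
        intro a _ b _ h
        simp only at h
        exact Fin.ext (by exact_mod_cast h))
    calc _ ≤ ({(i : ℤ) - 1, (i : ℤ) + 1} : Finset ℤ).card := this
      _ ≤ 2 := Finset.card_insert_le _ _ |>.trans (by simp)
  calc (↑(Finset.filter _ (Finset.univ.erase i)).card : ℝ) * (α/24)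
      ≤ 2 * (α/24) := by
        apply mul_le_mul_of_nonneg_right _ (by linarith)
        exact_mod_cast hcard
    _ = α / 12 := by ring

end rows

open Matrix in
lemma entry_symm {α : ℝ} {N : ℕ} (c : ℝ) (i j : Fin N) :
    (compactTridiag α N - c • fracToeplitz α N) i j
      = (compactTridiag α N - c • fracToeplitz α N) j i := by
  simp only [Matrix.sub_apply, Matrix.smul_apply, smul_eq_mul, compactTridiag, fracToeplitz]
  have hA : fracCoeff α ((i:ℤ) - (j:ℤ)) = fracCoeff α ((j:ℤ) - (i:ℤ)) := by
    rw [show (i:ℤ) - (j:ℤ) = -((j:ℤ) - (i:ℤ)) by ring, fracCoeff_symm]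
  rw [hA]
  congr 1
  by_cases h : i = j
  · subst h; rfl
  · rw [if_neg h, if_neg (Ne.symm h), if_congr or_comm rfl rfl]


theorem scheme_matrix_posDef (α : ℝ) (hα1 : 1 < α) (hα2 : α < 2)
    (N : ℕ) (hN : 1 ≤ N) (τ hx ν κ : ℝ) (hτ : 0 < τ) (hh : 0 < hx) (hν : 0 < ν)
    (hκ : κ ≠ 0)
    (hcond : τ / hx ^ α * (τ * ν ^ 2 / 12 + 1 / τ)⁻¹ ≤
      (6 - α) / (2 * κ ^ 2 * fracCoeff α 0)) :
    ∀ v : Fin N → ℝ, v ≠ 0 →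
      0 < v ⬝ᵥ ((compactTridiag α N -
        (τ * κ ^ 2 / (6 * hx ^ α) * (τ * ν ^ 2 / 12 + 1 / τ)⁻¹) •
          fracToeplitz α N).mulVec v) := by
  intro v hv
  set c : ℝ := τ * κ ^ 2 / (6 * hx ^ α) * (τ * ν ^ 2 / 12 + 1 / τ)⁻¹ with hc
  have hg0 : 0 < fracCoeff α 0 := fracCoeff_zero_pos hα1 hα2
  have hκ2 : 0 < κ ^ 2 := by positivity
  have hhx : 0 < hx ^ α := Real.rpow_pos_of_pos hh α
  have hwpos : 0 < (τ * ν ^ 2 / 12 + 1 / τ)⁻¹ := by positivity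
  have hc0 : 0 < c := by rw [hc]; positivity
  have hcg : c * fracCoeff α 0 ≤ (6 - α) / 12 := by
    have h1 : c * fracCoeff α 0
        = (κ ^ 2 * fracCoeff α 0 / 6) * (τ / hx ^ α * (τ * ν ^ 2 / 12 + 1 / τ)⁻¹) := by
      rw [hc]; field_simp
    have h2 : (κ ^ 2 * fracCoeff α 0 / 6) * (τ / hx ^ α * (τ * ν ^ 2 / 12 + 1 / τ)⁻¹)
        ≤ (κ ^ 2 * fracCoeff α 0 / 6) * ((6 - α) / (2 * κ ^ 2 * fracCoeff α 0)) :=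
      mul_le_mul_of_nonneg_left hcond (by positivity)
    have h3 : (κ ^ 2 * fracCoeff α 0 / 6) * ((6 - α) / (2 * κ ^ 2 * fracCoeff α 0))
        = (6 - α) / 12 := by
      field_simp
      ring
    rw [h1]
    rw [h3] at h2
    exact h2
  apply posdef_of_sdd _ (fun i j => by rw [entry_symm]) _ v hv
  intro i
  have hGii : (compactTridiag α N - c • fracToeplitz α N) i i
      = (1 - α / 12) - c * fracCoeff α 0 := by
    simp only [Matrix.sub_apply, Matrix.smul_apply, smul_eq_mul, compactTridiag, fracToeplitz,
      if_pos rfl, sub_self]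
    norm_num
  rw [hGii]
  have hterm : ∀ j ∈ Finset.univ.erase i,
      |(compactTridiag α N - c • fracToeplitz α N) i j|
        ≤ |compactTridiag α N i j| + c * |fracToeplitz α N i j| := by
    intro j _
    have h1 : (compactTridiag α N - c • fracToeplitz α N) i j
        = compactTridiag α N i j + -(c * fracToeplitz α N i j) := by
      simp [Matrix.sub_apply, Matrix.smul_apply, smul_eq_mul, sub_eq_add_neg]
    rw [h1]
    calc |compactTridiag α N i j + -(c * fracToeplitz α N i j)|
        ≤ |compactTridiag α N i j| + |-(c * fracToeplitz α N i j)| := abs_add_le _ _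
      _ = |compactTridiag α N i j| + c * |fracToeplitz α N i j| := by
          rw [abs_neg, abs_mul, abs_of_pos hc0]
  have hsum := Finset.sum_le_sum hterm
  rw [Finset.sum_add_distrib] at hsum
  have hD := rowD hα1 hα2 (N := N) i
  have hA := rowA hα1 hα2 hN i
  have hcA : c * ∑ j ∈ Finset.univ.erase i, |fracToeplitz α N i j| < c * fracCoeff α 0 :=
    mul_lt_mul_of_pos_left hA hc0
  rw [← Finset.mul_sum] at hsum
  calc ∑ j ∈ Finset.univ.erase i, |(compactTridiag α N - c • fracToeplitz α N) i j|
      ≤ ∑ j ∈ Finset.univ.erase i, |compactTridiag α N i j|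
        + c * ∑ j ∈ Finset.univ.erase i, |fracToeplitz α N i j| := by
        exact hsum
    _ < 1 - α / 12 - c * fracCoeff α 0 := by linarith
end

section
/- For every real α with α ≥ 1, the series Σ_{n=1}^{∞} 1/((n + α/2)(n + α)) converges and satisfies the strict bound (1/2) · Σ_{n=1}^{∞} 1/((n + α/2)(n + α)) < π²/4 − 2. -/
open Real

theorem series_bound_pi_sq (α : ℝ) (hα : 1 ≤ α) :
    Summable (fun n : ℕ => 1 / ((((n : ℝ) + 1) + α / 2) * (((n : ℝ) + 1) + α))) ∧
    (1 / 2) * ∑' n : ℕ, 1 / ((((n : ℝ) + 1) + α / 2) * (((n : ℝ) + 1) + α)) <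
      π ^ 2 / 4 - 2 := by
  -- auxiliary sums
  have hbasel : HasSum (fun n : ℕ => (1 : ℝ) / (n : ℝ) ^ 2) (π ^ 2 / 6) := hasSum_zeta_two
  have heven : HasSum (fun k : ℕ => (1 : ℝ) / ((2 * k : ℕ) : ℝ) ^ 2) (π ^ 2 / 24) := by
    have h := hbasel.mul_left (1 / 4)
    have hfun : (fun k : ℕ => (1 : ℝ) / ((2 * k : ℕ) : ℝ) ^ 2) =
        fun k : ℕ => 1 / 4 * (1 / (k : ℝ) ^ 2) := by
      funext k
      push_cast
      rcases eq_or_ne (k : ℝ) 0 with hk | hk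
      · simp [hk]
      · field_simp; ring
    rw [hfun]
    convert h using 1
    · rfl
    · ring
  have hoddsummable : Summable (fun k : ℕ => (1 : ℝ) / ((2 * k + 1 : ℕ) : ℝ) ^ 2) := by
    have hinj : Function.Injective (fun k : ℕ => 2 * k + 1) := by
      intro a b hab
      simp only at hab
      omega
    exact (hbasel.summable.comp_injective hinj).congr fun k => rfl
  have hodd : HasSum (fun k : ℕ => (1 : ℝ) / ((2 * k + 1 : ℕ) : ℝ) ^ 2) (π ^ 2 / 8) := by
    have h : HasSum (fun n : ℕ => (1 : ℝ) / (n : ℝ) ^ 2)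
        (π ^ 2 / 24 + ∑' k : ℕ, (1 : ℝ) / ((2 * k + 1 : ℕ) : ℝ) ^ 2) :=
      HasSum.even_add_odd heven hoddsummable.hasSum
    have := h.unique hbasel
    have : (∑' k : ℕ, (1 : ℝ) / ((2 * k + 1 : ℕ) : ℝ) ^ 2) = π ^ 2 / 8 := by linarith
    rw [← this]; exact hoddsummable.hasSum
  -- shift odd sum by one: sum over k ≥ 1 of 1/(2k+1)^2 = π²/8 - 1
  have hshift : HasSum (fun k : ℕ => (1 : ℝ) / ((2 * (k + 1) + 1 : ℕ) : ℝ) ^ 2)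
      (π ^ 2 / 8 - 1) := by
    have h1 : HasSum (fun k : ℕ => (1 : ℝ) / ((2 * k + 1 : ℕ) : ℝ) ^ 2)
        ((π ^ 2 / 8 - 1) + ∑ i ∈ Finset.range 1, (1 : ℝ) / ((2 * i + 1 : ℕ) : ℝ) ^ 2) := by
      convert hodd using 1
      simp
    have := (hasSum_nat_add_iff (f := fun k : ℕ => (1 : ℝ) / ((2 * k + 1 : ℕ) : ℝ) ^ 2) 1).mpr h1
    exact this
  -- the comparison series g n = 1/(n+3/2)^2 has sum π²/2 - 4
  have hg : HasSum (fun n : ℕ => (1 : ℝ) / ((n : ℝ) + 3 / 2) ^ 2) (π ^ 2 / 2 - 4) := by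
    have h := hshift.mul_left 4
    have hfun : (fun n : ℕ => (1 : ℝ) / ((n : ℝ) + 3 / 2) ^ 2) =
        fun n : ℕ => 4 * ((1 : ℝ) / ((2 * (n + 1) + 1 : ℕ) : ℝ) ^ 2) := by
      funext n
      push_cast
      have h1 : ((n : ℝ) + 3 / 2) ^ 2 ≠ 0 := by positivity
      have h2 : ((2 : ℝ) * ((n : ℝ) + 1) + 1) ^ 2 ≠ 0 := by positivity
      field_simp
      ring
    rw [hfun]
    convert h using 1
    · rfl
    · ring
  -- termwise inequalities
  have key : ∀ n : ℕ, (1 : ℝ) / ((((n : ℝ) + 1) + α / 2) * (((n : ℝ) + 1) + α)) <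
      1 / ((n : ℝ) + 3 / 2) ^ 2 := by
    intro n
    have hn : (0 : ℝ) ≤ (n : ℝ) := n.cast_nonneg
    apply one_div_lt_one_div_of_lt
    · positivity
    · nlinarith [sq_nonneg ((n : ℝ) + 3 / 2)]
  have hnonneg : ∀ n : ℕ, (0 : ℝ) ≤ 1 / ((((n : ℝ) + 1) + α / 2) * (((n : ℝ) + 1) + α)) := by
    intro n
    have hn : (0 : ℝ) ≤ (n : ℝ) := n.cast_nonneg
    positivity
  have hsum : Summable (fun n : ℕ => 1 / ((((n : ℝ) + 1) + α / 2) * (((n : ℝ) + 1) + α))) :=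
    Summable.of_nonneg_of_le hnonneg (fun n => (key n).le) hg.summable
  refine ⟨hsum, ?_⟩
  have hlt : (∑' n : ℕ, 1 / ((((n : ℝ) + 1) + α / 2) * (((n : ℝ) + 1) + α))) <
      ∑' n : ℕ, (1 : ℝ) / ((n : ℝ) + 3 / 2) ^ 2 :=
    Summable.tsum_lt_tsum (fun n => (key n).le) (key 0) hsum hg.summable
  rw [hg.tsum_eq] at hlt
  linarith
end
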